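/- Let c₁, c₂ ∈ ℂ with c₁ ≠ c₂, and let g₁, g₂ : ℂ → ℂ be analytic at c₁, c₂ respectively with g₁(c₁) ≠ 0 and g₂(c₂) ≠ 0. Suppose f : ℂ → ℂ satisfies f(z) = g₁(z)·(z − c₁)⁻⁷ on a punctured neighborhood of c₁ and f(z) = g₂(z)·(z − c₂)⁻¹ on a punctured neighborhood of c₂ (poles of order 7 and 1). Then the quadratic residues of MP(f) at c₁ and c₂ are −49/(4π²) and −1/(4π²) respectively; in particular their ratio equals 49. -/

import Mathlib

open Complex Filter

/-- The Mulase–Penkava density of a function `f : ℂ → ℂ`: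
`MP f z = (1/(4π²)) · (f'(z))² / (f z · (1 − f z))`. -/
noncomputable def MP (f : ℂ → ℂ) (z : ℂ) : ℂ :=
  (1 / (4 * (Real.pi : ℂ) ^ 2)) * (deriv f z) ^ 2 / (f z * (1 - f z))

lemma deriv_eventuallyEq_punctured {f h : ℂ → ℂ} {c : ℂ}
    (hfh : f =ᶠ[nhdsWithin c {c}ᶜ] h) : deriv f =ᶠ[nhdsWithin c {c}ᶜ] deriv h := by
  rw [Filter.eventuallyEq_iff_exists_mem] at hfh
  obtain ⟨s, hs, heq⟩ := hfh
  rw [mem_nhdsWithin] at hs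
  obtain ⟨U, hU, hcU, hsub⟩ := hs
  have ht : U ∩ {c}ᶜ ∈ nhdsWithin c {c}ᶜ :=
    mem_nhdsWithin.2 ⟨U, hU, hcU, fun z hz => hz⟩
  filter_upwards [ht] with z hz
  have hopen : IsOpen (U ∩ {c}ᶜ) := hU.inter isOpen_compl_singleton
  have : f =ᶠ[nhds z] h := by
    filter_upwards [hopen.mem_nhds hz] with w hw using heq (hsub hw)
  exact this.deriv_eq


lemma alg (C N G A u : ℂ) (hG : G ≠ 0) (hA : A ≠ 0) (hu : u ≠ 0) (m : ℕ) :
    u ^ 2 * (C * (N * (u ^ (m + 2))⁻¹) ^ 2 / (G * A * (u ^ (2 * m + 2))⁻¹))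
      = C * N ^ 2 / (G * A) := by
  have h1 : u ^ (m + 2) ≠ 0 := pow_ne_zero _ hu
  have h2 : u ^ (2 * m + 2) ≠ 0 := pow_ne_zero _ hu
  field_simp
  ring

set_option maxHeartbeats 1000000 in
lemma aux (c : ℂ) (m : ℕ) (g f : ℂ → ℂ) (hg : AnalyticAt ℂ g c) (hgc : g c ≠ 0)
    (hf : ∀ᶠ z in nhdsWithin c {c}ᶜ, f z = g z * ((z - c) ^ (m + 1))⁻¹) :
    Tendsto (fun z => (z - c) ^ 2 * MP f z) (nhdsWithin c {c}ᶜ)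
      (nhds (-((m : ℂ) + 1) ^ 2 / (4 * (Real.pi : ℂ) ^ 2))) := by
  set φ : ℂ → ℂ := fun z =>
    (1 / (4 * (Real.pi : ℂ) ^ 2)) * (deriv g z * (z - c) - ((m : ℂ) + 1) * g z) ^ 2 /
      (g z * ((z - c) ^ (m + 1) - g z)) with hφ
  have hdg : ContinuousAt (deriv g) c := by
    obtain ⟨s, hs, hsa⟩ := hg.exists_mem_nhds_analyticOnNhd
    exact ((hsa.deriv) c (mem_of_mem_nhds hs)).continuousAt
  have hgcont : ContinuousAt g c := hg.continuousAt
  have hden : ContinuousAt (fun z => g z * ((z - c) ^ (m + 1) - g z)) c := by fun_prop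
  have hdenc : g c * ((c - c) ^ (m + 1) - g c) ≠ 0 := by
    simp only [sub_self]
    rw [zero_pow (by omega : m + 1 ≠ 0)]
    simp only [zero_sub, mul_neg, neg_ne_zero]
    exact mul_ne_zero hgc hgc
  have hcontφ : ContinuousAt φ c := by
    apply ContinuousAt.div _ hden hdenc
    fun_prop
  have hval : φ c = -((m : ℂ) + 1) ^ 2 / (4 * (Real.pi : ℂ) ^ 2) := by
    simp only [hφ, sub_self]
    rw [zero_pow (by omega : m + 1 ≠ 0)]
    have hpi : (4 : ℂ) * (Real.pi : ℂ) ^ 2 ≠ 0 := by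
      simp [Real.pi_ne_zero]
    field_simp
    ring
  have hT : Tendsto φ (nhdsWithin c {c}ᶜ)
      (nhds (-((m : ℂ) + 1) ^ 2 / (4 * (Real.pi : ℂ) ^ 2))) := by
    rw [← hval]
    exact hcontφ.continuousWithinAt.tendsto
  apply hT.congr'
  have hderiv : deriv f =ᶠ[nhdsWithin c {c}ᶜ]
      deriv (fun z => g z * ((z - c) ^ (m + 1))⁻¹) :=
    deriv_eventuallyEq_punctured hf
  have han : ∀ᶠ z in nhdsWithin c {c}ᶜ, AnalyticAt ℂ g z :=
    (hg.eventually_analyticAt).filter_mono nhdsWithin_le_nhds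
  have hgne : ∀ᶠ z in nhdsWithin c {c}ᶜ, g z ≠ 0 :=
    (hgcont.eventually_ne hgc).filter_mono nhdsWithin_le_nhds
  have hdne : ∀ᶠ z in nhdsWithin c {c}ᶜ, (z - c) ^ (m + 1) - g z ≠ 0 := by
    have h1 : ContinuousAt (fun z => (z - c) ^ (m + 1) - g z) c := by fun_prop
    have h2 : (c - c) ^ (m + 1) - g c ≠ 0 := by
      simp only [sub_self]
      rw [zero_pow (by omega : m + 1 ≠ 0)]
      simpa using hgc
    exact ((h1.tendsto.eventually_ne (by simpa using h2))).filter_mono nhdsWithin_le_nhds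
  filter_upwards [hf, hderiv, han, hgne, hdne, self_mem_nhdsWithin] with z hfz hdz haz hgz hdnz hzc
  have hu : z - c ≠ 0 := sub_ne_zero.2 hzc
  have hupow : (z - c) ^ (m + 1) ≠ 0 := pow_ne_zero _ hu
  have h1 : HasDerivAt (fun w => ((w - c) ^ (m + 1))⁻¹)
      (-((↑(m + 1) : ℂ) * (z - c) ^ (m + 1 - 1) * 1) / ((z - c) ^ (m + 1)) ^ 2) z := by
    have h0 : HasDerivAt (fun w => (w - c) ^ (m + 1))
        ((↑(m + 1) : ℂ) * (z - c) ^ (m + 1 - 1) * 1) z :=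
      ((hasDerivAt_id z).sub_const c).pow (m + 1)
    exact h0.inv hupow
  have h2 : HasDerivAt (fun w => g w * ((w - c) ^ (m + 1))⁻¹)
      (deriv g z * ((z - c) ^ (m + 1))⁻¹ +
        g z * (-((↑(m + 1) : ℂ) * (z - c) ^ (m + 1 - 1) * 1) / ((z - c) ^ (m + 1)) ^ 2)) z :=
    (haz.differentiableAt.hasDerivAt).mul h1
  have hdfz : deriv f z = deriv g z * ((z - c) ^ (m + 1))⁻¹ +
      g z * (-((↑(m + 1) : ℂ) * (z - c) ^ (m + 1 - 1) * 1) / ((z - c) ^ (m + 1)) ^ 2) := by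
    rw [hdz]; exact h2.deriv
  have e1 : deriv g z * ((z - c) ^ (m + 1))⁻¹ +
      g z * (-((↑(m + 1) : ℂ) * (z - c) ^ (m + 1 - 1) * 1) / ((z - c) ^ (m + 1)) ^ 2)
      = (deriv g z * (z - c) - ((m : ℂ) + 1) * g z) * ((z - c) ^ (m + 2))⁻¹ := by
    have hm : m + 1 - 1 = m := by omega
    rw [hm]
    have hp2 : (z - c) ^ (m + 2) ≠ 0 := pow_ne_zero _ hu
    field_simp
    push_cast
    ring
  have e2 : g z * ((z - c) ^ (m + 1))⁻¹ * (1 - g z * ((z - c) ^ (m + 1))⁻¹)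
      = g z * ((z - c) ^ (m + 1) - g z) * ((z - c) ^ (2 * m + 2))⁻¹ := by
    have hp2 : (z - c) ^ (2 * m + 2) ≠ 0 := pow_ne_zero _ hu
    field_simp
    ring
  show φ z = (z - c) ^ 2 * MP f z
  symm
  rw [hφ, MP, hfz, hdfz, e1, e2]
  exact alg _ _ _ _ _ hgz hdnz hu m

/-- If `f` has poles of orders `7` and `1` at `c₁ ≠ c₂` (with analytic nonvanishing units
`g₁, g₂`), then the quadratic residues of `MP f` at `c₁` and `c₂` are `−49/(4π²)` and
`−1/(4π²)` respectively; in particular their ratio is `49`. -/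
theorem stmt_4 (c₁ c₂ : ℂ) (hc : c₁ ≠ c₂) (g₁ g₂ f : ℂ → ℂ)
    (hg₁ : AnalyticAt ℂ g₁ c₁) (hg₁c : g₁ c₁ ≠ 0)
    (hg₂ : AnalyticAt ℂ g₂ c₂) (hg₂c : g₂ c₂ ≠ 0)
    (hf₁ : ∀ᶠ z in nhdsWithin c₁ {c₁}ᶜ, f z = g₁ z * ((z - c₁) ^ 7)⁻¹)
    (hf₂ : ∀ᶠ z in nhdsWithin c₂ {c₂}ᶜ, f z = g₂ z * ((z - c₂) ^ 1)⁻¹) :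
    Tendsto (fun z => (z - c₁) ^ 2 * MP f z) (nhdsWithin c₁ {c₁}ᶜ)
      (nhds (-49 / (4 * (Real.pi : ℂ) ^ 2))) ∧
    Tendsto (fun z => (z - c₂) ^ 2 * MP f z) (nhdsWithin c₂ {c₂}ᶜ)
      (nhds (-1 / (4 * (Real.pi : ℂ) ^ 2))) ∧
    (-49 / (4 * (Real.pi : ℂ) ^ 2)) / (-1 / (4 * (Real.pi : ℂ) ^ 2)) = 49 := by
  have hpi : (4 : ℂ) * (Real.pi : ℂ) ^ 2 ≠ 0 := by simp [Real.pi_ne_zero]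
  refine ⟨?_, ?_, ?_⟩
  · have := aux c₁ 6 g₁ f hg₁ hg₁c hf₁
    convert this using 2
    norm_num
  · have := aux c₂ 0 g₂ f hg₂ hg₂c hf₂
    convert this using 2
    norm_num
  · field_simp
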